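/- For every real number λ > 0, ∫₀^∞ [2λ · v^{−1/2}·λ^{−3}·exp(−1/(v·λ²))/√π] · [v^{−3/2}·exp(−1/v)/√π] dv = 2/(π·(1+λ²)). In other words, mixing the density of λ obtained from λ² | v ~ InverseGamma(1/2, 1/v) over v ~ InverseGamma(1/2, 1) yields the half-Cauchy density 2/(π·(1+λ²)). -/

import Mathlib

open MeasureTheory Set Filter Real Topology

lemma key_integral {c : ℝ} (hc : 0 < c) :
    ∫ v in Set.Ioi (0 : ℝ), Real.exp (-c / v) / v ^ 2 = 1 / c := by
  set g : ℝ → ℝ := fun v => if v = 0 then 0 else Real.exp (-c / v) / c with hg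
  have hderiv : ∀ x ∈ Ioi (0 : ℝ), HasDerivAt g (Real.exp (-c / x) / x ^ 2) x := by
    intro x hx
    have hx0 : x ≠ 0 := ne_of_gt hx
    have h1 : HasDerivAt (fun v : ℝ => -c / v) (c / x ^ 2) x := by
      have := (hasDerivAt_inv hx0).const_mul (-c)
      simpa [div_eq_mul_inv, mul_comm, mul_assoc, mul_left_comm, neg_mul, neg_neg]
        using this
    have h2 : HasDerivAt (fun v : ℝ => Real.exp (-c / v) / c)
        (Real.exp (-c / x) * (c / x ^ 2) / c) x := (h1.exp).div_const c
    have h2' : Real.exp (-c / x) * (c / x ^ 2) / c = Real.exp (-c / x) / x ^ 2 := by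
      field_simp
    rw [h2'] at h2
    apply h2.congr_of_eventuallyEq
    filter_upwards [eventually_ne_nhds hx0] with v hv
    simp [hg, hv]
  have hcont : ContinuousWithinAt g (Ici (0 : ℝ)) 0 := by
    have h0 : g 0 = 0 := by simp [hg]
    unfold ContinuousWithinAt
    rw [h0]
    have : Ici (0 : ℝ) = {0} ∪ Ioi 0 := by
      ext x; simp [le_iff_lt_or_eq, or_comm, eq_comm]
    rw [this, nhdsWithin_union, tendsto_sup]
    constructor
    · rw [nhdsWithin_singleton]
      simpa [h0] using tendsto_pure_nhds g 0
    · have hlim : Tendsto (fun v : ℝ => Real.exp (-c / v) / c) (𝓝[>] (0 : ℝ)) (𝓝 0) := by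
        have h1 : Tendsto (fun v : ℝ => -c / v) (𝓝[>] (0 : ℝ)) atBot := by
          have h1' : Tendsto (fun v : ℝ => c * v⁻¹) (𝓝[>] (0:ℝ)) atTop :=
            tendsto_inv_nhdsGT_zero.const_mul_atTop hc
          refine (tendsto_neg_atTop_atBot.comp h1').congr fun x => ?_
          simp [Function.comp, div_eq_mul_inv, neg_mul]
        have := (Real.tendsto_exp_atBot.comp h1).div_const c
        simpa using this
      refine hlim.congr' ?_
      filter_upwards [self_mem_nhdsWithin] with v hv
      simp [hg, (mem_Ioi.mp hv).ne']
  have htop : Tendsto g atTop (𝓝 (1 / c)) := by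
    have hlim : Tendsto (fun v : ℝ => Real.exp (-c / v) / c) atTop (𝓝 (1 / c)) := by
      have h1 : Tendsto (fun v : ℝ => -c / v) atTop (𝓝 0) := by
        simpa [div_eq_mul_inv] using tendsto_inv_atTop_zero.const_mul (-c)
      have := (Real.continuous_exp.tendsto 0).comp h1
      simpa using this.div_const c
    refine hlim.congr' ?_
    filter_upwards [eventually_ne_atTop (0:ℝ)] with v hv
    simp [hg, hv]
  have hpos : ∀ x ∈ Ioi (0 : ℝ), 0 ≤ Real.exp (-c / x) / x ^ 2 := by
    intro x hx; positivity
  have := integral_Ioi_of_hasDerivAt_of_nonneg hcont hderiv hpos htop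
  simpa [hg] using this

/-- Mixing the density of `λ` obtained from `λ² | v ~ InverseGamma(1/2, 1/v)` over
`v ~ InverseGamma(1/2, 1)` yields the half-Cauchy density `2/(π·(1+λ²))`. -/
theorem invGamma_mixture_eq_halfCauchy (l : ℝ) (hl : 0 < l) :
    ∫ v in Set.Ioi (0 : ℝ),
        (2 * l * v ^ (-(1 / 2) : ℝ) * l ^ (-3 : ℤ) * Real.exp (-1 / (v * l ^ 2))
            / Real.sqrt Real.pi)
          * (v ^ (-(3 / 2) : ℝ) * Real.exp (-1 / v) / Real.sqrt Real.pi)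
      = 2 / (Real.pi * (1 + l ^ 2)) := by
  have hl0 : l ≠ 0 := ne_of_gt hl
  set c : ℝ := 1 + 1 / l ^ 2 with hc
  have hcpos : 0 < c := by positivity
  have heq : ∀ v ∈ Ioi (0 : ℝ),
      (2 * l * v ^ (-(1 / 2) : ℝ) * l ^ (-3 : ℤ) * Real.exp (-1 / (v * l ^ 2))
            / Real.sqrt Real.pi)
          * (v ^ (-(3 / 2) : ℝ) * Real.exp (-1 / v) / Real.sqrt Real.pi)
        = (2 / (Real.pi * l ^ 2)) * (Real.exp (-c / v) / v ^ 2) := by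
    intro v hv
    have hv0 : (0:ℝ) < v := hv
    have hvne : v ≠ 0 := ne_of_gt hv0
    have hrpow : v ^ (-(1 / 2) : ℝ) * v ^ (-(3 / 2) : ℝ) = 1 / v ^ 2 := by
      rw [← Real.rpow_add hv0]
      norm_num
    have hexp : Real.exp (-1 / (v * l ^ 2)) * Real.exp (-1 / v) = Real.exp (-c / v) := by
      rw [← Real.exp_add]
      congr 1
      field_simp [hc]
      rw [hc, mul_add, mul_one, mul_one_div, div_self (pow_ne_zero 2 hl0)]
      ring
    have hsqrt : Real.sqrt Real.pi * Real.sqrt Real.pi = Real.pi :=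
      Real.mul_self_sqrt Real.pi_nonneg
    have hzpow : l ^ (-3 : ℤ) = 1 / l ^ 3 := by
      rw [zpow_neg, inv_eq_one_div, show ((3:ℤ) = (3:ℕ)) from rfl, zpow_natCast]
    have hpi : Real.pi ≠ 0 := Real.pi_ne_zero
    calc (2 * l * v ^ (-(1 / 2) : ℝ) * l ^ (-3 : ℤ) * Real.exp (-1 / (v * l ^ 2))
            / Real.sqrt Real.pi)
          * (v ^ (-(3 / 2) : ℝ) * Real.exp (-1 / v) / Real.sqrt Real.pi)
        = (2 * l * (1 / l ^ 3) / (Real.sqrt Real.pi * Real.sqrt Real.pi))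
            * ((v ^ (-(1 / 2) : ℝ) * v ^ (-(3 / 2) : ℝ))
              * (Real.exp (-1 / (v * l ^ 2)) * Real.exp (-1 / v))) := by
          rw [hzpow]; ring
      _ = (2 * l * (1 / l ^ 3) / Real.pi) * ((1 / v ^ 2) * Real.exp (-c / v)) := by
          rw [hrpow, hexp, hsqrt]
      _ = (2 / (Real.pi * l ^ 2)) * (Real.exp (-c / v) / v ^ 2) := by
          field_simp
  rw [setIntegral_congr_fun measurableSet_Ioi heq, integral_const_mul,
    key_integral hcpos]
  rw [hc]
  field_simp
  ring
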